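/- arXiv:math/9711219 — 2 statements merged into one kernel-verified Lean document; each statement's English description precedes it below -/
import Mathlib

section
/- Let D ∈ ℚ[[w, z, ℏ]] be the formal power series D(w,z) = exp((w³+z³)ℏ/24) · ∑_{n≥0} (n!/(2n+1)!) · (½·w·z·(w+z)·ℏ)^n. Then D satisfies the equation (2w·∂_w + 1)((w+z)·D(w,z)) = w·D(w,z) + ¼·(w+z)³·w·ℏ·D(w,z) + D(w,0)·z·D(0,z) + 2w·D(w,0)·D(0,z), where ∂_w denotes the formal partial derivative with respect to w, D(w,0) denotes the series obtained from D by setting z = 0, and D(0,z) denotes the series obtained by setting w = 0. -/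
noncomputable section

/-- The ring `ℚ[[w, z, ℏ]]` of formal power series in three variables. -/
abbrev R3 : Type := MvPowerSeries (Fin 3) ℚ

/-- The variable `w`. -/
def W : R3 := MvPowerSeries.X 0
/-- The variable `z`. -/
def Z : R3 := MvPowerSeries.X 1
/-- The variable `ℏ`. -/
def H : R3 := MvPowerSeries.X 2

/-- Total degree of a monomial. -/
def deg (m : Fin 3 →₀ ℕ) : ℕ := m 0 + m 1 + m 2

/-- The formal exponential `exp S = ∑_{n≥0} Sⁿ/n!` of a power series `S`
(intended for `S` with zero constant term, in which case the coefficient of any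
monomial `m` only receives contributions from `n ≤ deg m`). -/
def mvExp (S : R3) : R3 := fun m =>
  ∑ n ∈ Finset.range (deg m + 1), (n.factorial : ℚ)⁻¹ * MvPowerSeries.coeff (R := ℚ) m (S ^ n)

/-- The sum `∑_{n≥0} f n` of a family of power series (intended when the coefficient of
any monomial `m` in `f n` vanishes for `n > deg m`, e.g. when `f n` is divisible by `ℏⁿ`). -/
def seriesSum (f : ℕ → R3) : R3 := fun m =>
  ∑ n ∈ Finset.range (deg m + 1), MvPowerSeries.coeff (R := ℚ) m (f n)

/-- The formal partial derivative `∂_w`, sending `wⁱ zʲ ℏᵏ` to `i·wⁱ⁻¹ zʲ ℏᵏ`. -/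
def dW (f : R3) : R3 := fun m =>
  ((m 0 : ℚ) + 1) * MvPowerSeries.coeff (R := ℚ) (m + Finsupp.single 0 1) f

/-- Setting `z = 0`: keep only the monomials not involving `z`. -/
def setZ0 (f : R3) : R3 := fun m => if m 1 = 0 then MvPowerSeries.coeff (R := ℚ) m f else 0

/-- Setting `w = 0`: keep only the monomials not involving `w`. -/
def setW0 (f : R3) : R3 := fun m => if m 0 = 0 then MvPowerSeries.coeff (R := ℚ) m f else 0

/-- Substituting `-z` for `z`: the coefficient of `wⁱ zʲ ℏᵏ` picks up a sign `(-1)ʲ`. -/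
def negZ (f : R3) : R3 := fun m => (-1 : ℚ) ^ (m 1) * MvPowerSeries.coeff (R := ℚ) m f

/-- The automorphism swapping `w` and `z`, on the level of coefficients. -/
def swapWZ (f : R3) : R3 := fun m =>
  MvPowerSeries.coeff (R := ℚ) (Finsupp.equivMapDomain (Equiv.swap (0 : Fin 3) 1) m) f

/-- Dijkgraaf's two-point function
`D(w,z) = exp((w³+z³)ℏ/24) · ∑_{n≥0} (n!/(2n+1)!) (½ w z (w+z) ℏ)ⁿ`. -/
def Dser : R3 :=
  mvExp (MvPowerSeries.C (σ := Fin 3) (R := ℚ) (1 / 24) * (W ^ 3 + Z ^ 3) * H) *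
    seriesSum fun n =>
      MvPowerSeries.C (σ := Fin 3) (R := ℚ) ((n.factorial : ℚ) / ((2 * n + 1).factorial : ℚ)) *
        (MvPowerSeries.C (σ := Fin 3) (R := ℚ) (1 / 2) * W * Z * (W + Z) * H) ^ n


open MvPowerSeries Finset

abbrev e0 : Fin 3 →₀ ℕ := Finsupp.single 0 1
abbrev Cc (q : ℚ) : R3 := MvPowerSeries.C (σ := Fin 3) (R := ℚ) q

lemma dW_coeff (f : R3) (m : Fin 3 →₀ ℕ) :
    coeff (R := ℚ) m (dW f) = ((m 0 : ℚ) + 1) * coeff (R := ℚ) (m + e0) f := rfl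

/-! ### H-divisibility -/

def HD (k : ℕ) (f : R3) : Prop := ∀ m : Fin 3 →₀ ℕ, m 2 < k → coeff (R := ℚ) m f = 0

lemma HD_zero (f : R3) : HD 0 f := fun _ h => absurd h (Nat.not_lt_zero _)

lemma HD_mul {k l : ℕ} {f g : R3} (hf : HD k f) (hg : HD l g) : HD (k + l) (f * g) := by
  intro m hm
  rw [coeff_mul]
  refine Finset.sum_eq_zero fun p hp => ?_
  rw [Finset.HasAntidiagonal.mem_antidiagonal] at hp
  have h2 : p.1 2 + p.2 2 = m 2 := by
    have := DFunLike.congr_fun hp (2 : Fin 3); simpa using this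
  rcases lt_or_ge (p.1 2) k with h | h
  · rw [hf _ h, zero_mul]
  · rw [hg _ (by omega), mul_zero]

lemma HD_H : HD 1 H := by
  intro m hm
  rw [H, coeff_X]
  rw [if_neg]
  intro h
  rw [h] at hm
  simp at hm

lemma HD_Cmul {k : ℕ} {f : R3} (q : ℚ) (hf : HD k f) : HD k (Cc q * f) := by
  intro m hm
  rw [coeff_C_mul, hf m hm, mul_zero]

lemma HD_pow {f : R3} (hf : HD 1 f) (n : ℕ) : HD n (f ^ n) := by
  induction n with
  | zero => exact HD_zero _
  | succ n ih =>
    have := HD_mul hf ih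
    rw [pow_succ, mul_comm]
    simpa [Nat.add_comm] using this

lemma HD_dW {k : ℕ} {f : R3} (hf : HD k f) : HD k (dW f) := by
  intro m hm
  rw [dW_coeff, hf, mul_zero]
  simpa using hm

lemma HD_mono {k l : ℕ} {f : R3} (h : l ≤ k) (hf : HD k f) : HD l f :=
  fun m hm => hf m (lt_of_lt_of_le hm h)

/-! ### dW is a derivation -/

lemma sum_shift (m : Fin 3 →₀ ℕ) (F : (Fin 3 →₀ ℕ) × (Fin 3 →₀ ℕ) → ℚ) :
    ∑ p ∈ antidiagonal (m + e0), (p.1 0 : ℚ) * F p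
    = ∑ q ∈ antidiagonal m, ((q.1 0 : ℚ) + 1) * F (q.1 + e0, q.2) := by
  rw [← Finset.sum_filter_of_ne (p := fun p => p.1 0 ≠ 0)
    (fun p _ hne h0 => hne (by simp [h0]))]
  refine Finset.sum_bij' (fun p _ => ((p.1 - e0 : Fin 3 →₀ ℕ), p.2))
    (fun q _ => (q.1 + e0, q.2)) ?_ ?_ ?_ ?_ ?_
  · intro p hp
    simp only [mem_filter, Finset.HasAntidiagonal.mem_antidiagonal] at hp
    obtain ⟨hsum, h0⟩ := hp
    rw [Finset.HasAntidiagonal.mem_antidiagonal]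
    have hle : e0 ≤ p.1 := by
      rw [Finsupp.le_iff]; intro i hi
      simp only [Finsupp.mem_support_iff, Finsupp.single_apply] at hi ⊢
      rcases eq_or_ne (0 : Fin 3) i with h | h
      · subst h; simpa using Nat.one_le_iff_ne_zero.2 h0
      · simp [h] at hi
    have h1 : p.1 - e0 + e0 = p.1 := tsub_add_cancel_of_le hle
    calc p.1 - e0 + p.2 = p.1 + p.2 - e0 := by
          rw [← h1]; ext i; simp; omega
      _ = m := by rw [hsum]; ext i; simp
  · intro q hq
    simp only [Finset.HasAntidiagonal.mem_antidiagonal] at hq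
    simp only [mem_filter, Finset.HasAntidiagonal.mem_antidiagonal]
    constructor
    · rw [← hq]; ext i; simp; ring
    · simp
  · intro p hp
    simp only [mem_filter, Finset.HasAntidiagonal.mem_antidiagonal] at hp
    have hle : e0 ≤ p.1 := by
      rw [Finsupp.le_iff]; intro i hi
      simp only [Finsupp.mem_support_iff, Finsupp.single_apply] at hi ⊢
      rcases eq_or_ne (0 : Fin 3) i with h | h
      · subst h; simpa using Nat.one_le_iff_ne_zero.2 hp.2
      · simp [h] at hi
    ext <;> simp [tsub_add_cancel_of_le hle]
  · intro q hq
    ext <;> simp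
  · intro p hp
    simp only [mem_filter, Finset.HasAntidiagonal.mem_antidiagonal] at hp
    have hle : e0 ≤ p.1 := by
      rw [Finsupp.le_iff]; intro i hi
      simp only [Finsupp.mem_support_iff, Finsupp.single_apply] at hi ⊢
      rcases eq_or_ne (0 : Fin 3) i with h | h
      · subst h; simpa using Nat.one_le_iff_ne_zero.2 hp.2
      · simp [h] at hi
    have h1 : p.1 - e0 + e0 = p.1 := tsub_add_cancel_of_le hle
    have h2 : (p.1 - e0) 0 + 1 = p.1 0 := by
      have := DFunLike.congr_fun h1 (0 : Fin 3); simpa using this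
    rw [h1]
    have : ((p.1 - e0) 0 : ℚ) + 1 = (p.1 0 : ℚ) := by exact_mod_cast h2
    rw [this]

lemma sum_swap_AD (s : Fin 3 →₀ ℕ) (F : (Fin 3 →₀ ℕ) × (Fin 3 →₀ ℕ) → ℚ) :
    ∑ p ∈ antidiagonal s, F p = ∑ p ∈ antidiagonal s, F (p.2, p.1) := by
  conv_lhs => rw [← Finset.HasAntidiagonal.map_swap_antidiagonal (n := s)]
  rw [Finset.sum_map]
  rfl

lemma dW_add (f g : R3) : dW (f + g) = dW f + dW g := by
  ext m
  rw [map_add, dW_coeff, dW_coeff, dW_coeff, map_add]; ring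

lemma dW_mul (f g : R3) : dW (f * g) = dW f * g + f * dW g := by
  ext m
  rw [map_add, dW_coeff, coeff_mul, coeff_mul, coeff_mul, Finset.mul_sum]
  have key : ∀ p ∈ antidiagonal (m + e0),
      ((m 0 : ℚ) + 1) * (coeff (R := ℚ) p.1 f * coeff (R := ℚ) p.2 g)
      = (p.1 0 : ℚ) * (coeff (R := ℚ) p.1 f * coeff (R := ℚ) p.2 g)
        + (p.2 0 : ℚ) * (coeff (R := ℚ) p.1 f * coeff (R := ℚ) p.2 g) := by
    intro p hp
    rw [Finset.HasAntidiagonal.mem_antidiagonal] at hp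
    have h1 : p.1 0 + p.2 0 = m 0 + 1 := by
      have := DFunLike.congr_fun hp (0 : Fin 3); simpa using this
    have : (p.1 0 : ℚ) + (p.2 0 : ℚ) = (m 0 : ℚ) + 1 := by exact_mod_cast h1
    rw [← this]; ring
  rw [Finset.sum_congr rfl key, Finset.sum_add_distrib]
  congr 1
  · rw [sum_shift m (fun p => coeff (R := ℚ) p.1 f * coeff (R := ℚ) p.2 g)]
    refine Finset.sum_congr rfl fun q _ => ?_
    rw [dW_coeff]; ring
  · rw [sum_swap_AD (m + e0) (fun p => (p.2 0 : ℚ) * (coeff (R := ℚ) p.1 f * coeff (R := ℚ) p.2 g))]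
    simp only
    rw [sum_shift m (fun p => coeff (R := ℚ) p.2 f * coeff (R := ℚ) p.1 g)]
    rw [sum_swap_AD m]
    refine Finset.sum_congr rfl fun q _ => ?_
    rw [dW_coeff]; ring

lemma dW_C (q : ℚ) : dW (Cc q) = 0 := by
  ext m
  rw [dW_coeff, coeff_C, if_neg, mul_zero, map_zero]
  intro h
  have := DFunLike.congr_fun h (0 : Fin 3); simp at this

lemma dW_one : dW (1 : R3) = 0 := by
  rw [show (1 : R3) = Cc 1 from (map_one (MvPowerSeries.C (σ := Fin 3) (R := ℚ))).symm]
  exact dW_C 1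

lemma dW_W : dW W = 1 := by
  ext m
  rw [dW_coeff, W, coeff_X]
  rcases eq_or_ne m 0 with h | h
  · subst h
    rw [if_pos (by ext i; simp), coeff_one, if_pos rfl]; simp
  · rw [if_neg, coeff_one, if_neg h, mul_zero]
    intro hc
    apply h
    have : m + e0 = 0 + e0 := by rw [hc]; ext i; simp
    exact add_right_cancel this
  
lemma dW_Z : dW Z = 0 := by
  ext m
  rw [dW_coeff, Z, coeff_X, if_neg, mul_zero, map_zero]
  intro h
  have := DFunLike.congr_fun h (0 : Fin 3); simp at this

lemma dW_H : dW H = 0 := by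
  ext m
  rw [dW_coeff, H, coeff_X, if_neg, mul_zero, map_zero]
  intro h
  have := DFunLike.congr_fun h (0 : Fin 3); simp at this

/-! ### seriesSum -/

lemma seriesSum_coeff (f : ℕ → R3) (m : Fin 3 →₀ ℕ) :
    coeff (R := ℚ) m (seriesSum f) = ∑ n ∈ Finset.range (deg m + 1), coeff (R := ℚ) m (f n) := rfl

lemma m2_le_deg (m : Fin 3 →₀ ℕ) : m 2 ≤ deg m := by simp [deg]

lemma deg_le_of_mem_AD {m : Fin 3 →₀ ℕ} {p : (Fin 3 →₀ ℕ) × (Fin 3 →₀ ℕ)}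
    (hp : p ∈ antidiagonal m) : deg p.1 ≤ deg m ∧ deg p.2 ≤ deg m := by
  rw [Finset.HasAntidiagonal.mem_antidiagonal] at hp
  have h0 := DFunLike.congr_fun hp (0 : Fin 3)
  have h1 := DFunLike.congr_fun hp (1 : Fin 3)
  have h2 := DFunLike.congr_fun hp (2 : Fin 3)
  simp only [Finsupp.coe_add, Pi.add_apply] at h0 h1 h2
  constructor <;> simp only [deg] <;> omega

lemma deg_add_e0 (m : Fin 3 →₀ ℕ) : deg (m + e0) = deg m + 1 := by
  simp [deg]; ring

lemma seriesSum_congr {f g : ℕ → R3} (h : ∀ n, f n = g n) : seriesSum f = seriesSum g := by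
  have : f = g := funext h
  rw [this]

lemma seriesSum_add (f g : ℕ → R3) :
    seriesSum (fun n => f n + g n) = seriesSum f + seriesSum g := by
  ext m
  rw [map_add, seriesSum_coeff, seriesSum_coeff, seriesSum_coeff, ← Finset.sum_add_distrib]
  exact Finset.sum_congr rfl fun n _ => by rw [map_add]

lemma seriesSum_of_tail_zero (f : ℕ → R3) (h : ∀ n, 0 < n → f n = 0) :
    seriesSum f = f 0 := by
  ext m
  rw [seriesSum_coeff]
  rw [Finset.sum_eq_single 0]
  · intro n hn hne
    rw [h n (Nat.pos_of_ne_zero hne), map_zero]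
  · intro h0; simp at h0

lemma mul_seriesSum (g : R3) (f : ℕ → R3) (hf : ∀ n, HD n (f n)) :
    g * seriesSum f = seriesSum (fun n => g * f n) := by
  ext m
  rw [coeff_mul, seriesSum_coeff]
  have step1 : ∀ p ∈ antidiagonal m,
      coeff (R := ℚ) p.1 g * coeff (R := ℚ) p.2 (seriesSum f)
      = ∑ n ∈ Finset.range (deg m + 1), coeff (R := ℚ) p.1 g * coeff (R := ℚ) p.2 (f n) := by
    intro p hp
    rw [seriesSum_coeff, Finset.mul_sum]
    refine Finset.sum_subset (Finset.range_subset_range.2 (by have := (deg_le_of_mem_AD hp).2; omega)) ?_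
    intro n _ hn
    rw [Finset.mem_range, not_lt] at hn
    have h2 : p.2 2 < n := by
      have := (deg_le_of_mem_AD hp).2
      have := m2_le_deg p.2
      omega
    rw [hf n p.2 h2, mul_zero]
  rw [Finset.sum_congr rfl step1, Finset.sum_comm]
  exact Finset.sum_congr rfl fun n _ => (coeff_mul _ _ _).symm

lemma seriesSum_mul_const (g : R3) (f : ℕ → R3) (hf : ∀ n, HD n (f n)) :
    seriesSum f * g = seriesSum (fun n => f n * g) := by
  rw [mul_comm, mul_seriesSum g f hf]
  exact seriesSum_congr fun n => mul_comm _ _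

lemma dW_seriesSum (f : ℕ → R3) (hf : ∀ n, HD n (f n)) :
    dW (seriesSum f) = seriesSum (fun n => dW (f n)) := by
  ext m
  rw [dW_coeff, seriesSum_coeff, seriesSum_coeff, deg_add_e0, Finset.mul_sum,
    Finset.sum_range_succ]
  have hlast : coeff (R := ℚ) (m + e0) (f (deg m + 1)) = 0 := by
    apply hf
    have : (m + e0) 2 = m 2 := by simp
    rw [this]
    have := m2_le_deg m; omega
  rw [hlast, mul_zero, add_zero]
  exact Finset.sum_congr rfl fun n _ => by rw [dW_coeff]

lemma seriesSum_shift (f : ℕ → R3) (h0 : f 0 = 0) (hf : ∀ n, HD n (f n)) :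
    seriesSum f = seriesSum (fun n => f (n + 1)) := by
  ext m
  rw [seriesSum_coeff, seriesSum_coeff, Finset.sum_range_succ', Finset.sum_range_succ]
  rw [h0, map_zero, add_zero]
  have hlast : coeff (R := ℚ) m (f (deg m + 1)) = 0 := by
    apply hf
    have := m2_le_deg m; omega
  rw [hlast, add_zero]

/-! ### Cc lemmas -/

lemma Cc_add (a b : ℚ) : Cc (a + b) = Cc a + Cc b := map_add _ _ _
lemma Cc_mul (a b : ℚ) : Cc (a * b) = Cc a * Cc b := map_mul _ _ _
lemma Cc_one : Cc 1 = 1 := map_one _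
lemma Cc_natCast (n : ℕ) : Cc (n : ℚ) = (n : R3) := map_natCast _ _

/-! ### mvExp -/

lemma mvExp_eq (S : R3) :
    mvExp S = seriesSum (fun n => Cc (n.factorial : ℚ)⁻¹ * S ^ n) := by
  ext m
  rw [seriesSum_coeff]
  show ∑ n ∈ Finset.range (deg m + 1), (n.factorial : ℚ)⁻¹ * coeff (R := ℚ) m (S ^ n) = _
  exact Finset.sum_congr rfl fun n _ => by rw [coeff_C_mul]

lemma dW_pow_succ (S : R3) (n : ℕ) :
    dW (S ^ (n + 1)) = Cc ((n : ℚ) + 1) * S ^ n * dW S := by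
  induction n with
  | zero =>
    have h1 : Cc (((0:ℕ):ℚ) + 1) = 1 := by
      rw [show (((0:ℕ):ℚ) + 1) = 1 by norm_num]
      exact Cc_one
    rw [pow_one, pow_zero, h1, one_mul, one_mul]
  | succ n ih =>
    have h2 : Cc ((((n+1):ℕ):ℚ) + 1) = Cc ((n:ℚ) + 1) + 1 := by
      rw [show ((((n+1):ℕ):ℚ) + 1) = ((n:ℚ) + 1) + 1 by push_cast; ring, Cc_add, Cc_one]
    rw [pow_succ, dW_mul, ih, h2]
    ring

lemma HD_mvExp_term (S : R3) (hS : HD 1 S) (n : ℕ) (a : ℚ) : HD n (Cc a * S ^ n) :=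
  HD_Cmul a (HD_pow hS n)

lemma dW_mvExp (S : R3) (hS : HD 1 S) : dW (mvExp S) = dW S * mvExp S := by
  rw [mvExp_eq, dW_seriesSum _ (fun n => HD_mvExp_term S hS n _)]
  have step1 : ∀ n : ℕ, dW (Cc ((n.factorial : ℚ))⁻¹ * S ^ n)
      = Cc ((n.factorial : ℚ))⁻¹ * dW (S ^ n) := by
    intro n
    rw [dW_mul, dW_C]; ring
  rw [seriesSum_congr step1]
  rw [seriesSum_shift (fun n => Cc ((n.factorial : ℚ))⁻¹ * dW (S ^ n))
    (by show Cc ((Nat.factorial 0 : ℚ))⁻¹ * dW (S ^ 0) = 0; rw [pow_zero, dW_one, mul_zero])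
    (fun n => HD_Cmul _ (HD_dW (HD_pow hS n)))]
  rw [mul_seriesSum _ _ (fun n => HD_mvExp_term S hS n _)]
  refine seriesSum_congr fun n => ?_
  rw [dW_pow_succ]
  have hfact : ((n + 1).factorial : ℚ)⁻¹ * ((n : ℚ) + 1) = (n.factorial : ℚ)⁻¹ := by
    rw [Nat.factorial_succ]
    push_cast
    rw [mul_inv]
    have h1 : ((n : ℚ) + 1) ≠ 0 := by positivity
    field_simp
  calc Cc ((n + 1).factorial : ℚ)⁻¹ * (Cc ((n : ℚ) + 1) * S ^ n * dW S)
      = Cc (((n + 1).factorial : ℚ)⁻¹ * ((n : ℚ) + 1)) * S ^ n * dW S := by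
        rw [Cc_mul]; ring
    _ = dW S * (Cc (n.factorial : ℚ)⁻¹ * S ^ n) := by rw [hfact]; ring

/-! ### product of two seriesSums -/

lemma square_eq_triangle (D : ℕ) (t : ℕ → ℕ → ℚ) (ht : ∀ k l, D < k + l → t k l = 0) :
    ∑ k ∈ Finset.range (D + 1), ∑ l ∈ Finset.range (D + 1), t k l
    = ∑ n ∈ Finset.range (D + 1), ∑ k ∈ Finset.range (n + 1), t k (n - k) := by
  rw [← Finset.sum_product', Finset.sum_sigma']
  rw [← Finset.sum_filter_of_ne (p := fun p : ℕ × ℕ => p.1 + p.2 ≤ D)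
    (fun p _ hne => by by_contra hc; exact hne (ht p.1 p.2 (by omega)))]
  refine Finset.sum_bij' (fun p _ => (⟨p.1 + p.2, p.1⟩ : Σ _ : ℕ, ℕ))
    (fun x _ => (x.2, x.1 - x.2)) ?_ ?_ ?_ ?_ ?_
  · intro p hp
    simp only [Finset.mem_filter, Finset.mem_product, Finset.mem_range] at hp
    simp only [Finset.mem_sigma, Finset.mem_range]
    omega
  · intro x hx
    simp only [Finset.mem_sigma, Finset.mem_range] at hx
    simp only [Finset.mem_filter, Finset.mem_product, Finset.mem_range]
    omega
  · intro p hp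
    simp only [Finset.mem_filter, Finset.mem_product, Finset.mem_range] at hp
    simp only
    congr 1 <;> omega
  · intro x hx
    simp only [Finset.mem_sigma, Finset.mem_range] at hx
    obtain ⟨a, b⟩ := x
    simp only [Finset.mem_range] at hx
    simp only
    congr 1
    omega
  · intro p hp
    simp only
    congr 1
    omega

lemma seriesSum_mul (f g : ℕ → R3) (hf : ∀ n, HD n (f n)) (hg : ∀ n, HD n (g n)) :
    seriesSum f * seriesSum g
    = seriesSum (fun n => ∑ k ∈ Finset.range (n + 1), f k * g (n - k)) := by
  ext m
  rw [coeff_mul, seriesSum_coeff]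
  have step1 : ∀ p ∈ antidiagonal m,
      coeff (R := ℚ) p.1 (seriesSum f) * coeff (R := ℚ) p.2 (seriesSum g)
      = ∑ k ∈ Finset.range (deg m + 1), ∑ l ∈ Finset.range (deg m + 1),
          coeff (R := ℚ) p.1 (f k) * coeff (R := ℚ) p.2 (g l) := by
    intro p hp
    rw [seriesSum_coeff, seriesSum_coeff, Finset.sum_mul_sum]
    have e1 : ∑ k ∈ Finset.range (deg p.1 + 1), coeff (R := ℚ) p.1 (f k)
        = ∑ k ∈ Finset.range (deg m + 1), coeff (R := ℚ) p.1 (f k) := by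
      refine Finset.sum_subset (Finset.range_subset_range.2 (by have := (deg_le_of_mem_AD hp).1; omega)) ?_
      intro n _ hn
      rw [Finset.mem_range, not_lt] at hn
      exact hf n p.1 (by have := (deg_le_of_mem_AD hp).1; have := m2_le_deg p.1; omega)
    have e2 : ∑ l ∈ Finset.range (deg p.2 + 1), coeff (R := ℚ) p.2 (g l)
        = ∑ l ∈ Finset.range (deg m + 1), coeff (R := ℚ) p.2 (g l) := by
      refine Finset.sum_subset (Finset.range_subset_range.2 (by have := (deg_le_of_mem_AD hp).2; omega)) ?_
      intro n _ hn
      rw [Finset.mem_range, not_lt] at hn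
      exact hg n p.2 (by have := (deg_le_of_mem_AD hp).2; have := m2_le_deg p.2; omega)
    rw [← Finset.sum_mul_sum, e1, e2, Finset.sum_mul_sum]
  rw [Finset.sum_congr rfl step1, Finset.sum_comm]
  have step2 : ∀ k ∈ Finset.range (deg m + 1),
      ∑ p ∈ antidiagonal m, ∑ l ∈ Finset.range (deg m + 1),
        coeff (R := ℚ) p.1 (f k) * coeff (R := ℚ) p.2 (g l)
      = ∑ l ∈ Finset.range (deg m + 1), coeff (R := ℚ) m (f k * g l) := by
    intro k _
    rw [Finset.sum_comm]
    exact Finset.sum_congr rfl fun l _ => (coeff_mul _ _ _).symm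
  rw [Finset.sum_congr rfl step2]
  rw [square_eq_triangle (deg m) (fun k l => coeff (R := ℚ) m (f k * g l))
    (fun k l hkl => HD_mul (hf k) (hg l) m (by have := m2_le_deg m; omega))]
  exact Finset.sum_congr rfl fun n _ => by rw [map_sum]

lemma mvExp_add (A B : R3) (hA : HD 1 A) (hB : HD 1 B) :
    mvExp (A + B) = mvExp A * mvExp B := by
  rw [mvExp_eq, mvExp_eq, mvExp_eq]
  rw [seriesSum_mul _ _ (fun n => HD_mvExp_term A hA n _) (fun n => HD_mvExp_term B hB n _)]
  refine seriesSum_congr fun n => ?_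
  rw [add_pow, Finset.mul_sum]
  refine Finset.sum_congr rfl fun k hk => ?_
  rw [Finset.mem_range] at hk
  have hkn : k ≤ n := by omega
  have hchoose : (n.factorial : ℚ)⁻¹ * (n.choose k : ℚ)
      = (k.factorial : ℚ)⁻¹ * ((n - k).factorial : ℚ)⁻¹ := by
    have h := Nat.choose_mul_factorial_mul_factorial hkn
    have hq : (n.choose k : ℚ) * (k.factorial : ℚ) * ((n - k).factorial : ℚ)
        = (n.factorial : ℚ) := by exact_mod_cast h
    have h1 : (k.factorial : ℚ) ≠ 0 := Nat.cast_ne_zero.2 k.factorial_ne_zero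
    have h2 : ((n - k).factorial : ℚ) ≠ 0 := Nat.cast_ne_zero.2 (n - k).factorial_ne_zero
    have h3 : (n.factorial : ℚ) ≠ 0 := Nat.cast_ne_zero.2 n.factorial_ne_zero
    field_simp
    linear_combination hq
  have hcast : ((n.choose k : ℕ) : R3) = Cc ((n.choose k : ℕ) : ℚ) :=
    (map_natCast (MvPowerSeries.C (σ := Fin 3) (R := ℚ)) _).symm
  calc Cc (n.factorial : ℚ)⁻¹ * (A ^ k * B ^ (n - k) * (n.choose k : R3))
      = (Cc (n.factorial : ℚ)⁻¹ * Cc (n.choose k : ℚ)) * (A ^ k * B ^ (n - k)) := by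
        rw [hcast]; ring
    _ = Cc (k.factorial : ℚ)⁻¹ * A ^ k * (Cc ((n - k).factorial : ℚ)⁻¹ * B ^ (n - k)) := by
        rw [← Cc_mul, hchoose, Cc_mul]; ring

/-! ### setZ0 and setW0 -/

lemma setZ0_coeff (f : R3) (m : Fin 3 →₀ ℕ) :
    coeff (R := ℚ) m (setZ0 f) = if m 1 = 0 then coeff (R := ℚ) m f else 0 := rfl

lemma setW0_coeff (f : R3) (m : Fin 3 →₀ ℕ) :
    coeff (R := ℚ) m (setW0 f) = if m 0 = 0 then coeff (R := ℚ) m f else 0 := rfl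

lemma setZ0_mul (f g : R3) : setZ0 (f * g) = setZ0 f * setZ0 g := by
  ext m
  rw [setZ0_coeff, coeff_mul, coeff_mul]
  by_cases hm : m 1 = 0
  · rw [if_pos hm]
    refine Finset.sum_congr rfl fun p hp => ?_
    rw [Finset.HasAntidiagonal.mem_antidiagonal] at hp
    have h1 : p.1 1 + p.2 1 = m 1 := by
      have := DFunLike.congr_fun hp (1 : Fin 3); simpa using this
    rw [setZ0_coeff, setZ0_coeff, if_pos (by omega), if_pos (by omega)]
  · rw [if_neg hm]
    refine (Finset.sum_eq_zero fun p hp => ?_).symm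
    rw [Finset.HasAntidiagonal.mem_antidiagonal] at hp
    have h1 : p.1 1 + p.2 1 = m 1 := by
      have := DFunLike.congr_fun hp (1 : Fin 3); simpa using this
    rcases Nat.eq_zero_or_pos (p.1 1) with h | h
    · rw [setZ0_coeff g p.2, if_neg (by omega), mul_zero]
    · rw [setZ0_coeff f p.1, if_neg (by omega), zero_mul]

lemma setW0_mul (f g : R3) : setW0 (f * g) = setW0 f * setW0 g := by
  ext m
  rw [setW0_coeff, coeff_mul, coeff_mul]
  by_cases hm : m 0 = 0
  · rw [if_pos hm]
    refine Finset.sum_congr rfl fun p hp => ?_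
    rw [Finset.HasAntidiagonal.mem_antidiagonal] at hp
    have h1 : p.1 0 + p.2 0 = m 0 := by
      have := DFunLike.congr_fun hp (0 : Fin 3); simpa using this
    rw [setW0_coeff, setW0_coeff, if_pos (by omega), if_pos (by omega)]
  · rw [if_neg hm]
    refine (Finset.sum_eq_zero fun p hp => ?_).symm
    rw [Finset.HasAntidiagonal.mem_antidiagonal] at hp
    have h1 : p.1 0 + p.2 0 = m 0 := by
      have := DFunLike.congr_fun hp (0 : Fin 3); simpa using this
    rcases Nat.eq_zero_or_pos (p.1 0) with h | h
    · rw [setW0_coeff g p.2, if_neg (by omega), mul_zero]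
    · rw [setW0_coeff f p.1, if_neg (by omega), zero_mul]

lemma setZ0_add (f g : R3) : setZ0 (f + g) = setZ0 f + setZ0 g := by
  ext m
  rw [map_add, setZ0_coeff, setZ0_coeff, setZ0_coeff, map_add]
  by_cases hm : m 1 = 0 <;> simp [hm]

lemma setW0_add (f g : R3) : setW0 (f + g) = setW0 f + setW0 g := by
  ext m
  rw [map_add, setW0_coeff, setW0_coeff, setW0_coeff, map_add]
  by_cases hm : m 0 = 0 <;> simp [hm]

lemma setZ0_C (q : ℚ) : setZ0 (Cc q) = Cc q := by
  ext m
  rw [setZ0_coeff]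
  by_cases hm : m 1 = 0
  · rw [if_pos hm]
  · rw [if_neg hm, coeff_C, if_neg]
    intro h; rw [h] at hm; simp at hm

lemma setW0_C (q : ℚ) : setW0 (Cc q) = Cc q := by
  ext m
  rw [setW0_coeff]
  by_cases hm : m 0 = 0
  · rw [if_pos hm]
  · rw [if_neg hm, coeff_C, if_neg]
    intro h; rw [h] at hm; simp at hm

lemma setZ0_X_ne (i : Fin 3) (hi : i ≠ 1) : setZ0 (MvPowerSeries.X i : R3) = MvPowerSeries.X i := by
  ext m
  rw [setZ0_coeff, coeff_X]
  by_cases hm : m 1 = 0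
  · rw [if_pos hm]
  · rw [if_neg hm, if_neg]
    intro h; rw [h] at hm
    rw [Finsupp.single_apply, if_neg hi] at hm
    exact hm rfl

lemma setW0_X_ne (i : Fin 3) (hi : i ≠ 0) : setW0 (MvPowerSeries.X i : R3) = MvPowerSeries.X i := by
  ext m
  rw [setW0_coeff, coeff_X]
  by_cases hm : m 0 = 0
  · rw [if_pos hm]
  · rw [if_neg hm, if_neg]
    intro h; rw [h] at hm
    rw [Finsupp.single_apply, if_neg hi] at hm
    exact hm rfl

lemma setZ0_Z : setZ0 Z = 0 := by
  ext m
  have h0 : coeff (R := ℚ) m (0 : R3) = 0 := map_zero _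
  rw [setZ0_coeff, Z, coeff_X, h0]
  by_cases hm : m 1 = 0
  · rw [if_pos hm, if_neg]
    intro h; rw [h] at hm; simp at hm
  · rw [if_neg hm]

lemma setW0_W : setW0 W = 0 := by
  ext m
  have h0 : coeff (R := ℚ) m (0 : R3) = 0 := map_zero _
  rw [setW0_coeff, W, coeff_X, h0]
  by_cases hm : m 0 = 0
  · rw [if_pos hm, if_neg]
    intro h; rw [h] at hm; simp at hm
  · rw [if_neg hm]

lemma setZ0_pow (f : R3) (n : ℕ) : setZ0 (f ^ n) = setZ0 f ^ n := by
  induction n with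
  | zero =>
    rw [pow_zero, pow_zero, ← Cc_one, setZ0_C]
  | succ n ih => rw [pow_succ, pow_succ, setZ0_mul, ih]

lemma setW0_pow (f : R3) (n : ℕ) : setW0 (f ^ n) = setW0 f ^ n := by
  induction n with
  | zero =>
    rw [pow_zero, pow_zero, ← Cc_one, setW0_C]
  | succ n ih => rw [pow_succ, pow_succ, setW0_mul, ih]

lemma setZ0_seriesSum (f : ℕ → R3) :
    setZ0 (seriesSum f) = seriesSum (fun n => setZ0 (f n)) := by
  ext m
  rw [setZ0_coeff, seriesSum_coeff, seriesSum_coeff]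
  by_cases hm : m 1 = 0
  · rw [if_pos hm]
    exact Finset.sum_congr rfl fun n _ => by rw [setZ0_coeff, if_pos hm]
  · rw [if_neg hm]
    exact (Finset.sum_eq_zero fun n _ => by rw [setZ0_coeff, if_neg hm]).symm

lemma setW0_seriesSum (f : ℕ → R3) :
    setW0 (seriesSum f) = seriesSum (fun n => setW0 (f n)) := by
  ext m
  rw [setW0_coeff, seriesSum_coeff, seriesSum_coeff]
  by_cases hm : m 0 = 0
  · rw [if_pos hm]
    exact Finset.sum_congr rfl fun n _ => by rw [setW0_coeff, if_pos hm]
  · rw [if_neg hm]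
    exact (Finset.sum_eq_zero fun n _ => by rw [setW0_coeff, if_neg hm]).symm

/-! ### The specific series -/

def SArg : R3 := Cc (1/24) * (W ^ 3 + Z ^ 3) * H
def uu : R3 := Cc (1/2) * W * Z * (W + Z) * H
def aa (n : ℕ) : ℚ := (n.factorial : ℚ) / ((2 * n + 1).factorial : ℚ)
def ff (n : ℕ) : R3 := Cc (aa n) * uu ^ n

lemma Cc_two : Cc 2 = 2 := by exact_mod_cast Cc_natCast 2
lemma Cc_three : Cc 3 = 3 := by exact_mod_cast Cc_natCast 3

lemma HD1_SArg : HD 1 SArg := by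
  have := HD_mul (HD_zero (Cc (1/24) * (W ^ 3 + Z ^ 3))) HD_H
  simpa [SArg] using this

lemma HD1_uu : HD 1 uu := by
  have := HD_mul (HD_zero (Cc (1/2) * W * Z * (W + Z))) HD_H
  simpa [uu] using this

lemma hffHD : ∀ n, HD n (ff n) := fun n => HD_Cmul _ (HD_pow HD1_uu n)

lemma aa_zero : aa 0 = 1 := by norm_num [aa, Nat.factorial]

lemma dW_SArg : dW SArg = Cc (1/8) * W ^ 2 * H := by
  have hC : Cc (1/8) = 3 * Cc (1/24) := by
    rw [show (1/8 : ℚ) = 3 * (1/24) by norm_num, Cc_mul, Cc_three]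
  rw [hC, SArg, show (W : R3) ^ 3 = W * W * W by ring, show (Z : R3) ^ 3 = Z * Z * Z by ring]
  simp only [dW_mul, dW_add, dW_C, dW_W, dW_Z, dW_H]
  ring

lemma dW_uu : dW uu = Cc (1/2) * Z * (2 * W + Z) * H := by
  rw [uu]
  simp only [dW_mul, dW_add, dW_C, dW_W, dW_Z, dW_H]
  ring

lemma key_rat (n : ℕ) : (2 * ((n : ℚ) + 1) + 1) * aa (n + 1) = aa n / 2 := by
  have h1 : 2 * (n + 1) + 1 = (2 * n + 1) + 1 + 1 := by ring
  rw [aa, aa, h1, Nat.factorial_succ ((2 * n + 1) + 1), Nat.factorial_succ (2 * n + 1),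
    Nat.factorial_succ n]
  have h2 : ((2 * n + 1).factorial : ℚ) ≠ 0 := Nat.cast_ne_zero.2 (Nat.factorial_ne_zero _)
  have h3 : ((n : ℚ) + 1) ≠ 0 := by positivity
  push_cast
  field_simp
  ring

/-- The per-index terms of the KdV identity for the hypergeometric-type factor. -/
def GG (n : ℕ) : R3 := (2 * W + Z) * Cc ((2 * (n : ℚ) + 1) * aa n) * uu ^ n

lemma HD_GG (n : ℕ) : HD n (GG n) := by
  have := HD_mul (HD_zero ((2 * W + Z) * Cc ((2 * (n : ℚ) + 1) * aa n))) (HD_pow HD1_uu n)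
  simpa [GG, mul_assoc] using this

lemma KEY : 2 * W * (W + Z) * dW (seriesSum ff) + (2 * W + Z) * seriesSum ff
    = Cc (1/4) * W * Z * (W + Z) * H * (2 * W + Z) * seriesSum ff + (2 * W + Z) := by
  -- LHS = seriesSum GG
  have hL : 2 * W * (W + Z) * dW (seriesSum ff) + (2 * W + Z) * seriesSum ff
      = seriesSum GG := by
    rw [dW_seriesSum ff hffHD,
      mul_seriesSum (2 * W * (W + Z)) _ (fun n => HD_dW (hffHD n)),
      mul_seriesSum (2 * W + Z) ff hffHD, ← seriesSum_add]
    refine seriesSum_congr fun n => ?_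
    cases n with
    | zero =>
      show 2 * W * (W + Z) * dW (ff 0) + (2 * W + Z) * ff 0 = GG 0
      have h0 : dW (ff 0) = 0 := by
        rw [ff, pow_zero, mul_one, dW_C]
      rw [h0, mul_zero, zero_add, GG, ff, pow_zero]
      rw [show (2 * ((0 : ℕ) : ℚ) + 1) * aa 0 = aa 0 by norm_num]
      ring
    | succ n =>
      show 2 * W * (W + Z) * dW (ff (n+1)) + (2 * W + Z) * ff (n+1) = GG (n+1)
      have h1 : dW (ff (n + 1)) = Cc (aa (n + 1)) * (Cc ((n : ℚ) + 1) * uu ^ n * dW uu) := by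
        rw [ff, dW_mul, dW_C, zero_mul, zero_add, dW_pow_succ]
      have hsplit : Cc ((2 * (((n : ℕ) + 1 : ℕ) : ℚ) + 1) * aa (n + 1))
          = 2 * Cc ((n : ℚ) + 1) * Cc (aa (n + 1)) + Cc (aa (n + 1)) := by
        rw [show (2 * (((n : ℕ) + 1 : ℕ) : ℚ) + 1) * aa (n + 1)
            = 2 * (((n : ℚ) + 1) * aa (n + 1)) + aa (n + 1) by push_cast; ring,
          Cc_add, Cc_mul, Cc_mul, Cc_two]
        ring
      rw [h1, dW_uu, GG, hsplit, ff, pow_succ, uu]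
      ring
  -- RHS = seriesSum GG
  have hR : Cc (1/4) * W * Z * (W + Z) * H * (2 * W + Z) * seriesSum ff + (2 * W + Z)
      = seriesSum GG := by
    rw [mul_seriesSum (Cc (1/4) * W * Z * (W + Z) * H * (2 * W + Z)) ff hffHD]
    have hsplitG : ∀ n, GG n
        = (if n = 0 then GG 0 else 0) + (if n = 0 then 0 else GG n) := by
      intro n; cases n <;> simp
    have h1 : seriesSum GG = GG 0 + seriesSum (fun n => if n = 0 then 0 else GG n) := by
      rw [seriesSum_congr hsplitG, seriesSum_add]
      congr 1
      rw [seriesSum_of_tail_zero _ (fun n hn => by rw [if_neg (by omega)]), if_pos rfl]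
    have h2 : seriesSum (fun n => if n = 0 then 0 else GG n)
        = seriesSum (fun n => GG (n + 1)) := by
      rw [seriesSum_shift _ (if_pos rfl) ?_]
      · exact seriesSum_congr fun n => by rw [if_neg (by omega)]
      · intro n
        cases n with
        | zero => exact fun m _ => by rw [if_pos rfl, map_zero]
        | succ n =>
          intro m hm
          rw [if_neg (by omega)]
          exact HD_GG (n + 1) m hm
    have hG0 : GG 0 = (2 * W + Z) := by
      rw [GG, pow_zero, show (2 * ((0 : ℕ) : ℚ) + 1) * aa 0 = 1 by rw [aa_zero]; norm_num,
        Cc_one]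
      ring
    rw [h1, h2, hG0]
    rw [add_comm]
    congr 1
    refine seriesSum_congr fun n => ?_
    have hc : Cc ((2 * (((n : ℕ) + 1 : ℕ) : ℚ) + 1) * aa (n + 1)) = Cc (aa n / 2) := by
      push_cast
      exact congrArg (fun q : ℚ => Cc q) (key_rat n)
    have hc2 : Cc (aa n / 2) * Cc (1/2) = Cc (1/4) * Cc (aa n) := by
      rw [← Cc_mul, ← Cc_mul]
      congr 1
      ring
    calc Cc (1/4) * W * Z * (W + Z) * H * (2 * W + Z) * ff n
        = Cc (1/4) * Cc (aa n) * W * Z * (W + Z) * H * (2 * W + Z) * uu ^ n := by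
          rw [ff]; ring
      _ = GG (n + 1) := by
          rw [GG, hc, pow_succ, uu, ← hc2]
          ring
  rw [hL, hR]

/-! ### setZ0 / setW0 of the factors -/

lemma setZ0_SArg : setZ0 SArg = Cc (1/24) * W ^ 3 * H := by
  rw [SArg, setZ0_mul, setZ0_mul, setZ0_add, setZ0_pow, setZ0_pow, setZ0_C, setZ0_Z]
  rw [show setZ0 W = W from setZ0_X_ne 0 (by decide),
    show setZ0 H = H from setZ0_X_ne 2 (by decide)]
  ring

lemma setW0_SArg : setW0 SArg = Cc (1/24) * Z ^ 3 * H := by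
  rw [SArg, setW0_mul, setW0_mul, setW0_add, setW0_pow, setW0_pow, setW0_C, setW0_W]
  rw [show setW0 Z = Z from setW0_X_ne 1 (by decide),
    show setW0 H = H from setW0_X_ne 2 (by decide)]
  ring

lemma setZ0_uu : setZ0 uu = 0 := by
  rw [uu, setZ0_mul, setZ0_mul, setZ0_mul, setZ0_Z]
  ring

lemma setW0_uu : setW0 uu = 0 := by
  rw [uu, setW0_mul, setW0_mul, setW0_mul, setW0_mul, setW0_W]
  ring

lemma setZ0_mvExp (S : R3) : setZ0 (mvExp S) = mvExp (setZ0 S) := by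
  rw [mvExp_eq, mvExp_eq, setZ0_seriesSum]
  exact seriesSum_congr fun n => by rw [setZ0_mul, setZ0_C, setZ0_pow]

lemma setW0_mvExp (S : R3) : setW0 (mvExp S) = mvExp (setW0 S) := by
  rw [mvExp_eq, mvExp_eq, setW0_seriesSum]
  exact seriesSum_congr fun n => by rw [setW0_mul, setW0_C, setW0_pow]

lemma setZ0_ff : setZ0 (seriesSum ff) = 1 := by
  rw [setZ0_seriesSum]
  have : ∀ n, setZ0 (ff n) = Cc (aa n) * (0 : R3) ^ n := by
    intro n; rw [ff, setZ0_mul, setZ0_C, setZ0_pow, setZ0_uu]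
  rw [seriesSum_congr this, seriesSum_of_tail_zero _ (fun n hn => by
    rw [zero_pow (by omega), mul_zero])]
  rw [pow_zero, mul_one, aa_zero, Cc_one]

lemma setW0_ff : setW0 (seriesSum ff) = 1 := by
  rw [setW0_seriesSum]
  have : ∀ n, setW0 (ff n) = Cc (aa n) * (0 : R3) ^ n := by
    intro n; rw [ff, setW0_mul, setW0_C, setW0_pow, setW0_uu]
  rw [seriesSum_congr this, seriesSum_of_tail_zero _ (fun n hn => by
    rw [zero_pow (by omega), mul_zero])]
  rw [pow_zero, mul_one, aa_zero, Cc_one]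

lemma Dser_eq : Dser = mvExp SArg * seriesSum ff := rfl

lemma HD1_AW : HD 1 (Cc (1/24) * W ^ 3 * H) := by
  have := HD_mul (HD_zero (Cc (1/24) * W ^ 3)) HD_H
  simpa [mul_assoc] using this

lemma HD1_BZ : HD 1 (Cc (1/24) * Z ^ 3 * H) := by
  have := HD_mul (HD_zero (Cc (1/24) * Z ^ 3)) HD_H
  simpa [mul_assoc] using this

/-- Dijkgraaf's formula (6): the series `D(w,z)` satisfies the translation of
Witten's KdV equation,
`(2w ∂_w + 1)((w+z) D) = w D + ¼ (w+z)³ w ℏ D + D(w,0) z D(0,z) + 2w D(w,0) D(0,z)`. -/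
theorem Dser_satisfies_KdV :
    2 * W * dW ((W + Z) * Dser) + (W + Z) * Dser =
      W * Dser + MvPowerSeries.C (σ := Fin 3) (R := ℚ) (1 / 4) * (W + Z) ^ 3 * W * H * Dser +
        setZ0 Dser * Z * setW0 Dser + 2 * W * setZ0 Dser * setW0 Dser := by
  have hZ : setZ0 Dser = mvExp (Cc (1/24) * W ^ 3 * H) := by
    rw [Dser_eq, setZ0_mul, setZ0_ff, setZ0_mvExp, setZ0_SArg, mul_one]
  have hW : setW0 Dser = mvExp (Cc (1/24) * Z ^ 3 * H) := by
    rw [Dser_eq, setW0_mul, setW0_ff, setW0_mvExp, setW0_SArg, mul_one]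
  have hprod : mvExp (Cc (1/24) * W ^ 3 * H) * mvExp (Cc (1/24) * Z ^ 3 * H)
      = mvExp SArg := by
    rw [← mvExp_add _ _ HD1_AW HD1_BZ]
    congr 1
    rw [SArg]; ring
  have hE : dW (mvExp SArg) = Cc (1/8) * W ^ 2 * H * mvExp SArg := by
    rw [dW_mvExp _ HD1_SArg, dW_SArg]
  have hdWfull : dW ((W + Z) * (mvExp SArg * seriesSum ff))
      = mvExp SArg * seriesSum ff
        + (W + Z) * ((Cc (1/8) * W ^ 2 * H * mvExp SArg) * seriesSum ff
          + mvExp SArg * dW (seriesSum ff)) := by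
    rw [dW_mul, dW_mul, dW_add, dW_W, dW_Z, hE]
    ring
  have hC4 : (MvPowerSeries.C (σ := Fin 3) (R := ℚ) (1/4) : R3) = 2 * Cc (1/8) := by
    have h := Cc_mul 2 (1/8)
    rw [Cc_two] at h
    rw [← h]
    norm_num
  rw [hZ, hW, Dser_eq, hdWfull]
  have hKEY := KEY
  linear_combination (mvExp SArg) * hKEY
    + (- (W ^ 3 * (W + Z) * H * mvExp SArg * seriesSum ff)) * hC4
    + (- (Z + 2 * W)) * hprod

end
end

section
/- Let G ∈ ℚ[[w, z, ℏ]] be the formal power series G(w,z) = exp(z³ℏ/24) · ∑_{n≥0} (n!/(2n+1)!) · (½·w·z·(w+z)·ℏ)^n. Then for all nonnegative integers a, m, g with m < g, the coefficient of w^a z^m ℏ^g in G is zero. -/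
noncomputable section

/-- The series `G = exp(z³ℏ/24) · ∑_{n≥0} (n!/(2n+1)!) (½ w z (w+z) ℏ)ⁿ`. -/
def Gser : R3 :=
  mvExp (MvPowerSeries.C (σ := Fin 3) (R := ℚ) (1 / 24) * Z ^ 3 * H) *
    seriesSum fun n =>
      MvPowerSeries.C (σ := Fin 3) (R := ℚ) ((n.factorial : ℚ) / ((2 * n + 1).factorial : ℚ)) *
        (MvPowerSeries.C (σ := Fin 3) (R := ℚ) (1 / 2) * W * Z * (W + Z) * H) ^ n

/-- Auxiliary predicate: every monomial in the support has `z`-exponent at least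
the `ℏ`-exponent. -/
def Pzh (f : R3) : Prop := ∀ μ : Fin 3 →₀ ℕ, μ 1 < μ 2 → MvPowerSeries.coeff (R := ℚ) μ f = 0

lemma Pzh_C (c : ℚ) : Pzh (MvPowerSeries.C (σ := Fin 3) (R := ℚ) c) := by
  intro μ h
  rw [MvPowerSeries.coeff_C]
  have : μ ≠ 0 := by
    intro h0; rw [h0] at h; simp at h
  simp [this]

lemma Pzh_one : Pzh (1 : R3) := by
  simpa using Pzh_C 1

lemma Pzh_mul {f g : R3} (hf : Pzh f) (hg : Pzh g) : Pzh (f * g) := by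
  intro μ h
  rw [MvPowerSeries.coeff_mul]
  apply Finset.sum_eq_zero
  intro p hp
  rw [Finset.HasAntidiagonal.mem_antidiagonal] at hp
  have h1 : p.1 1 + p.2 1 = μ 1 := by rw [← hp]; simp
  have h2 : p.1 2 + p.2 2 = μ 2 := by rw [← hp]; simp
  by_cases hc : p.1 1 < p.1 2
  · rw [hf _ hc, zero_mul]
  · have : p.2 1 < p.2 2 := by omega
    rw [hg _ this, mul_zero]

lemma Pzh_pow {f : R3} (hf : Pzh f) (n : ℕ) : Pzh (f ^ n) := by
  induction n with
  | zero => simpa using Pzh_one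
  | succ k ih => rw [pow_succ]; exact Pzh_mul ih hf

lemma Pzh_add {f g : R3} (hf : Pzh f) (hg : Pzh g) : Pzh (f + g) := by
  intro μ h
  rw [map_add, hf _ h, hg _ h, add_zero]

lemma Pzh_W : Pzh W := by
  intro μ h
  rw [W, MvPowerSeries.coeff_X]
  have : μ ≠ Finsupp.single (0 : Fin 3) 1 := by
    intro h0; rw [h0] at h; simp [Finsupp.single_apply] at h
  simp [this]

lemma Pzh_Z : Pzh Z := by
  intro μ h
  rw [Z, MvPowerSeries.coeff_X]
  have : μ ≠ Finsupp.single (1 : Fin 3) 1 := by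
    intro h0; rw [h0] at h; simp [Finsupp.single_apply] at h
  simp [this]

lemma Pzh_ZH : Pzh (Z * H) := by
  intro μ h
  rw [Z, H, MvPowerSeries.coeff_mul]
  apply Finset.sum_eq_zero
  intro p hp
  rw [Finset.HasAntidiagonal.mem_antidiagonal] at hp
  rw [MvPowerSeries.coeff_X, MvPowerSeries.coeff_X]
  by_cases h1 : p.1 = Finsupp.single (1 : Fin 3) 1
  · by_cases h2 : p.2 = Finsupp.single (2 : Fin 3) 1
    · exfalso
      rw [← hp, h1, h2] at h
      simp [Finsupp.single_apply] at h
    · simp [h2]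
  · simp [h1]

lemma Pzh_mvExp {S : R3} (hS : Pzh S) : Pzh (mvExp S) := by
  intro μ h
  rw [MvPowerSeries.coeff_apply, mvExp]
  apply Finset.sum_eq_zero
  intro n _
  rw [Pzh_pow hS n μ h, mul_zero]

lemma Pzh_seriesSum {f : ℕ → R3} (hf : ∀ n, Pzh (f n)) : Pzh (seriesSum f) := by
  intro μ h
  rw [MvPowerSeries.coeff_apply, seriesSum]
  apply Finset.sum_eq_zero
  intro n _
  exact hf n μ h

lemma Pzh_Gser : Pzh Gser := by
  have h1 : Pzh (MvPowerSeries.C (σ := Fin 3) (R := ℚ) (1 / 24) * Z ^ 3 * H) := by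
    have : MvPowerSeries.C (σ := Fin 3) (R := ℚ) (1 / 24) * Z ^ 3 * H
        = (MvPowerSeries.C (σ := Fin 3) (R := ℚ) (1 / 24) * Z ^ 2) * (Z * H) := by ring
    rw [this]
    exact Pzh_mul (Pzh_mul (Pzh_C _) (Pzh_pow Pzh_Z 2)) Pzh_ZH
  have hT : Pzh (MvPowerSeries.C (σ := Fin 3) (R := ℚ) (1 / 2) * W * Z * (W + Z) * H) := by
    have : MvPowerSeries.C (σ := Fin 3) (R := ℚ) (1 / 2) * W * Z * (W + Z) * H
        = (MvPowerSeries.C (σ := Fin 3) (R := ℚ) (1 / 2) * W * (W + Z)) * (Z * H) := by ring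
    rw [this]
    exact Pzh_mul (Pzh_mul (Pzh_mul (Pzh_C _) Pzh_W) (Pzh_add Pzh_W Pzh_Z)) Pzh_ZH
  exact Pzh_mul (Pzh_mvExp h1)
    (Pzh_seriesSum fun n => Pzh_mul (Pzh_C _) (Pzh_pow hT n))

/-- In the `ℏ^g` part of `G`, only powers of `z` with exponent at least `g` occur:
the coefficient of `w^a z^m ℏ^g` vanishes whenever `m < g`. -/
theorem Gser_coeff_vanish (a m g : ℕ) (hmg : m < g) :
    MvPowerSeries.coeff (R := ℚ)
      (Finsupp.single 0 a + Finsupp.single 1 m + Finsupp.single 2 g) Gser = 0 := by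
  apply Pzh_Gser
  simp [Finsupp.single_apply]
  omega

end
end
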